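/- Let A and B be commutative algebras over ℚ and h : A → B an additive map with h(a⁴) = h(a)⁴ for all a ∈ A. Then for all x, y, z ∈ A, h(xyz(x + y + z)) = h(x)h(y)h(z)(h(x) + h(y) + h(z)). -/

import Mathlib

theorem stmt_17 {A B : Type*} [CommRing A] [Algebra ℚ A] [CommRing B] [Algebra ℚ B]
    (h : A → B)
    (hadd : ∀ x y : A, h (x + y) = h x + h y)
    (hjordan : ∀ a : A, h (a ^ 4) = (h a) ^ 4) :
    ∀ x y z : A, h (x * y * z * (x + y + z)) = h x * h y * h z * (h x + h y + h z) := by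
  intro x y z
  let f : A →+ B := AddMonoidHom.mk' h hadd
  have hfj : ∀ a : A, f (a ^ 4) = (f a) ^ 4 := hjordan
  have key : ∀ a b c d : A, f (a * b * c * d) = f a * f b * f c * f d := by
    intro a b c d
    have e1 : (24 : ℕ) • (a * b * c * d) =
        ((a + b + c + d) ^ 4
          + ((a + b) ^ 4 + (a + c) ^ 4 + (a + d) ^ 4 + (b + c) ^ 4 + (b + d) ^ 4 + (c + d) ^ 4))
        - ((a + b + c) ^ 4 + (a + b + d) ^ 4 + (a + c + d) ^ 4 + (b + c + d) ^ 4)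
        - (a ^ 4 + b ^ 4 + c ^ 4 + d ^ 4) := by
      simp only [nsmul_eq_mul]; push_cast; ring
    have e2 := congrArg f e1
    rw [map_nsmul, map_sub, map_sub] at e2
    simp only [map_add, hfj] at e2
    have e3 : (24 : ℕ) • (f a * f b * f c * f d) =
        ((f a + f b + f c + f d) ^ 4
          + ((f a + f b) ^ 4 + (f a + f c) ^ 4 + (f a + f d) ^ 4 + (f b + f c) ^ 4
            + (f b + f d) ^ 4 + (f c + f d) ^ 4))
        - ((f a + f b + f c) ^ 4 + (f a + f b + f d) ^ 4 + (f a + f c + f d) ^ 4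
          + (f b + f c + f d) ^ 4)
        - ((f a) ^ 4 + (f b) ^ 4 + (f c) ^ 4 + (f d) ^ 4) := by
      simp only [nsmul_eq_mul]; push_cast; ring
    have e4 : (24 : ℕ) • f (a * b * c * d) = (24 : ℕ) • (f a * f b * f c * f d) := by
      rw [e2, e3]
    have e5 : (24 : ℚ) • f (a * b * c * d) = (24 : ℚ) • (f a * f b * f c * f d) := by
      have h1 := Nat.cast_smul_eq_nsmul ℚ 24 (f (a * b * c * d))
      have h2 := Nat.cast_smul_eq_nsmul ℚ 24 (f a * f b * f c * f d)
      push_cast at h1 h2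
      rw [h1, h2]; exact e4
    exact smul_right_injective B (by norm_num : (24 : ℚ) ≠ 0) e5
  have := key x y z (x + y + z)
  simpa [f, map_add] using this
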